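/- Let (S, o) be a right loop with G_S transitive on S \ {e}, f(x', x) = id for all x, and σ_y a homomorphism for some y ≠ e. Then every element of G_S is a twisted automorphism of (S, o), i.e., G_S is a subgroup of TAut(S, o). -/

import Mathlib

/-- A right loop: identity `e` and bijective right translations. -/
structure RightLoop (S : Type*) where
  op : S → S → S
  e : S
  op_e : ∀ x, op x e = x
  e_op : ∀ x, op e x = x
  bij : ∀ a, Function.Bijective (fun x => op x a)

/-- The inner mapping group: the subgroup of `Equiv.Perm S` generated by the
right inner mappings `f y z`. -/
def innerGroup {S : Type*} (f : S → S → Equiv.Perm S) : Subgroup (Equiv.Perm S) :=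
  Subgroup.closure (Set.range (fun p : S × S => f p.1 p.2))

/-- Under transitivity, `f(x', x) = id` and `σ_y` a homomorphism for some `y ≠ e`,
every member of `G_S` is a twisted automorphism of `(S, o)`. -/
theorem innerGroup_subset_taut {S : Type*} (L : RightLoop S)
    (inv : S → S) (hinv : ∀ x, L.op (inv x) x = L.e)
    (f : S → S → Equiv.Perm S)
    (hf : ∀ y z x, L.op (f y z x) (L.op y z) = L.op (L.op x y) z)
    (hff : ∀ x, f (inv x) x = 1)
    (σ : S → Equiv.Perm S → Equiv.Perm S)
    (hσ : ∀ y h x, L.op (σ y h x) (h y) = h (L.op x y))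
    (htrans : ∀ a b : S, a ≠ L.e → b ≠ L.e → ∃ h ∈ innerGroup f, h a = b)
    (y : S) (hy : y ≠ L.e)
    (hhom : ∀ h k, h ∈ innerGroup f → k ∈ innerGroup f → σ y (h * k) = σ y h * σ y k) :
    ∀ h ∈ innerGroup f, ∀ x w : S, w ≠ L.e →
      h (L.op x w) = L.op (inv (h (inv x))) (h w) := by
  have inj : ∀ a : S, Function.Injective (fun x => L.op x a) := fun a => (L.bij a).1
  have cancel : ∀ (a u v : S), L.op u a = L.op v a → u = v := fun a u v h => inj a h
  -- every element of the inner group fixes e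
  have hfix : ∀ h ∈ innerGroup f, h L.e = L.e := by
    intro h hh
    induction hh using Subgroup.closure_induction with
    | mem g hg =>
      obtain ⟨p, rfl⟩ := hg
      apply cancel (L.op p.1 p.2)
      have := hf p.1 p.2 L.e
      rw [L.e_op] at this
      rw [this, L.e_op]
    | one => rfl
    | mul a b _ _ ha hb => simp [Equiv.Perm.mul_apply, ha, hb]
    | inv a _ ha =>
      conv_lhs => rw [← ha]
      exact Equiv.symm_apply_apply a L.e
  -- (u o x') o x = u
  have hR : ∀ u x, L.op (L.op u (inv x)) x = u := by
    intro u x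
    have h1 := hf (inv x) x u
    rw [hff x] at h1
    rw [← h1, hinv x, L.op_e]
    rfl
  -- (u o x) o x' = u
  have hL : ∀ u x, L.op (L.op u x) (inv x) = u := by
    intro u x
    apply cancel x
    exact hR (L.op u x) x
  -- x o x' = e
  have hxinv : ∀ x, L.op x (inv x) = L.e := by
    intro x
    have := hL L.e x
    rwa [L.e_op] at this
  have hinve : inv L.e = L.e := by
    have := hinv L.e
    rwa [L.op_e] at this
  have hinvne : ∀ x, x ≠ L.e → inv x ≠ L.e := by
    intro x hx h
    apply hx
    have := hinv x
    rwa [h, L.e_op] at this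
  -- σ_{x'}(h)(x) = (h(x'))'
  have key : ∀ (h : Equiv.Perm S), h L.e = L.e → ∀ x, σ (inv x) h x = inv (h (inv x)) := by
    intro h he x
    apply cancel (h (inv x))
    rw [hσ (inv x) h x, hxinv x, he, hinv]
  -- cocycle identity
  have hcoc : ∀ (h k : Equiv.Perm S) (z x : S),
      σ z (h * k) x = σ (k z) h (σ z k x) := by
    intro h k z x
    apply cancel (h (k z))
    have h1 := hσ z (h * k) x
    simp only [Equiv.Perm.mul_apply] at h1
    rw [h1, hσ (k z) h (σ z k x), hσ z k x]
  -- independence of σ_w(h) from w ≠ e, for h in the inner group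
  have hind : ∀ h ∈ innerGroup f, ∀ w, w ≠ L.e → ∀ x, σ w h x = σ y h x := by
    intro h hh w hw x
    obtain ⟨k, hk, hky⟩ := htrans y w hy hw
    obtain ⟨x0, hx0⟩ := (σ y k).surjective x
    have h1 := hcoc h k y x0
    have h2 : σ y (h * k) x0 = σ y h (σ y k x0) := by
      rw [hhom h k hh hk]; rfl
    rw [hky, hx0] at h1
    rw [hx0] at h2
    rw [← h1, h2]
  intro h hh x w hw
  have he := hfix h hh
  rw [← hσ w h x]
  congr 1
  by_cases hx : x = L.e
  · subst hx
    have hse : σ w h L.e = L.e := by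
      apply cancel (h w)
      rw [hσ w h L.e, L.e_op, L.e_op]
    rw [hse, hinve, he, hinve]
  · rw [hind h hh w hw x, ← hind h hh (inv x) (hinvne x hx) x, key h he x]
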